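/- Let φ ∈ C²(ℝ) and q continuous satisfy -φ'' + q(x)φ = O(|x|^{-α}) as x → -∞, with φ(x) → 0 as x → -∞ and q(x) ≥ c|x| for all sufficiently negative x, where α, c > 0 are constants. Then φ(x) = O(|x|^{-α-1}) as x → -∞. -/

import Mathlib

open Filter

/-- Second derivative test: at a local min where `f` is differentiable nearby with
derivative `f'`, and `f'` has derivative `l`, we have `0 ≤ l`. -/
lemma second_deriv_test_aux {f f' : ℝ → ℝ} {a l : ℝ}
    (hf : ∀ᶠ x in nhds a, HasDerivAt f (f' x) x)
    (hf' : HasDerivAt f' l a)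
    (hmin : IsLocalMin f a) : 0 ≤ l := by
  by_contra hl
  push_neg at hl
  have hfa : f' a = 0 := hmin.hasDerivAt_eq_zero hf.self_of_nhds
  -- slope of f' tends to l < 0, so f' > 0 on a left punctured neighborhood
  have hslope := hasDerivAt_iff_tendsto_slope.mp hf'
  have hneg : ∀ᶠ x in nhdsWithin a {a}ᶜ, slope f' a x < 0 :=
    hslope.eventually (eventually_lt_nhds hl)
  have hleft : ∀ᶠ x in nhdsWithin a (Set.Iio a), 0 < f' x := by
    have hmono : nhdsWithin a (Set.Iio a) ≤ nhdsWithin a {a}ᶜ :=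
      nhdsWithin_mono a (fun x hx => ne_of_lt hx)
    filter_upwards [hneg.filter_mono hmono, self_mem_nhdsWithin] with x hx hx'
    have hxa : x - a < 0 := sub_neg.mpr hx'
    have hsl : slope f' a x = f' x / (x - a) := by
      simp [slope_def_field, hfa]
    rw [hsl] at hx
    by_contra h
    push_neg at h
    have : 0 ≤ f' x / (x - a) := by
      rw [← neg_div_neg_eq]
      exact div_nonneg (by linarith) (by linarith)
    linarith
  obtain ⟨l', hl', hIoo⟩ := mem_nhdsLT_iff_exists_Ioo_subset.mp hleft
  obtain ⟨ε, hε, hball⟩ := Metric.eventually_nhds_iff.mp (hf.and hmin)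
  set b := max l' (a - ε / 2) with hb
  have hba : b < a := max_lt hl' (by linarith)
  have hbe : a - ε / 2 ≤ b := le_max_right _ _
  -- f is strictly monotone on [b, a]
  have hmem : ∀ x ∈ Set.Icc b a, dist x a < ε := by
    intro x hx
    rw [Real.dist_eq, abs_sub_lt_iff]
    constructor <;> [linarith [hx.2]; linarith [hx.1]]
  have hsm : StrictMonoOn f (Set.Icc b a) := by
    apply strictMonoOn_of_deriv_pos (convex_Icc b a)
    · intro x hx
      exact ((hball (hmem x hx)).1.continuousAt).continuousWithinAt
    · intro x hx
      rw [interior_Icc] at hx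
      have hx' : x ∈ Set.Ioo l' a := ⟨lt_of_le_of_lt (le_max_left _ _) hx.1, hx.2⟩
      rw [(hball (hmem x ⟨le_of_lt hx.1, le_of_lt hx.2⟩)).1.deriv]
      exact hIoo hx'
  have h1 : f b < f a := hsm ⟨le_refl b, le_of_lt hba⟩ ⟨le_of_lt hba, le_refl a⟩ hba
  have h2 : f a ≤ f b := (hball (hmem b ⟨le_refl b, le_of_lt hba⟩)).2
  linarith

/-- Maximum principle / comparison lemma on a half line. -/
lemma barrier_nonneg {u u' u'' q : ℝ → ℝ} {b : ℝ}
    (hd1 : ∀ x ≤ b, HasDerivAt u (u' x) x)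
    (hd2 : ∀ x ≤ b, HasDerivAt u' (u'' x) x)
    (hqpos : ∀ x ≤ b, 0 < q x)
    (hineq : ∀ x ≤ b, 0 ≤ -u'' x + q x * u x)
    (hub : 0 ≤ u b)
    (hlim : Tendsto u atBot (nhds 0)) :
    ∀ x ≤ b, 0 ≤ u x := by
  intro x0 hx0
  by_contra hneg
  push_neg at hneg
  have hev : ∀ᶠ x in atBot, u x0 < u x := by
    have : Set.Ioi (u x0) ∈ nhds (0 : ℝ) := Ioi_mem_nhds hneg
    exact hlim.eventually this
  obtain ⟨M0, hM0⟩ := eventually_atBot.mp hev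
  set M := min M0 (x0 - 1) with hM
  have hMx0 : M ≤ x0 := le_trans (min_le_right _ _) (by linarith)
  have hMb : M ≤ b := le_trans hMx0 hx0
  have hMlt : M < x0 := lt_of_le_of_lt (min_le_right _ _) (by linarith)
  have hcont : ContinuousOn u (Set.Icc M b) := fun x hx =>
    ((hd1 x hx.2).continuousAt).continuousWithinAt
  obtain ⟨z, hz, hzmin⟩ := (isCompact_Icc).exists_isMinOn ⟨M, le_refl M, hMb⟩ hcont
  have hzx0 : u z ≤ u x0 := hzmin ⟨hMx0, hx0⟩
  have hzneg : u z < 0 := lt_of_le_of_lt hzx0 hneg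
  have hzM : M < z := by
    rcases lt_or_eq_of_le hz.1 with h | h
    · exact h
    · exfalso
      have : u x0 < u M := hM0 M (min_le_left _ _)
      rw [h] at this
      linarith
  have hzb : z < b := by
    rcases lt_or_eq_of_le hz.2 with h | h
    · exact h
    · exfalso; rw [h] at hzneg; linarith
  have hloc : IsLocalMin u z := hzmin.isLocalMin (Icc_mem_nhds hzM hzb)
  have hd2z : 0 ≤ u'' z := by
    apply second_deriv_test_aux (f' := u') _ (hd2 z (le_of_lt hzb)) hloc
    filter_upwards [Iio_mem_nhds hzb] with x hx
    exact hd1 x (le_of_lt hx)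
  have h1 := hineq z (le_of_lt hzb)
  have h2 : q z * u z < 0 := mul_neg_of_pos_of_neg (hqpos z (le_of_lt hzb)) hzneg
  linarith

/-- Derivative of `x ↦ (-x) ^ p` away from `0`. -/
lemma hasDerivAt_negpow (p : ℝ) {x : ℝ} (hx : x < 0) :
    HasDerivAt (fun y : ℝ => (-y) ^ p) (-p * (-x) ^ (p - 1)) x := by
  have h := Real.hasDerivAt_rpow_const (x := -x) (p := p) (Or.inl (by linarith))
  have h2 := h.comp x (hasDerivAt_neg x)
  refine h2.congr_deriv ?_
  ring

/-- Barrier lemma: if `-φ'' + qφ = O(|x|^{-α})` as `x → -∞`, `φ → 0` at `-∞`, and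
`q(x) ≥ c|x|` for sufficiently negative `x`, then `φ = O(|x|^{-α-1})` as `x → -∞`. -/
theorem stmt0 (φ q : ℝ → ℝ) (α c : ℝ) (hα : 0 < α) (hc : 0 < c)
    (hφ : ContDiff ℝ 2 φ) (hq : Continuous q)
    (hO : ∃ C > (0:ℝ), ∃ X : ℝ, ∀ x ≤ X, |(-(deriv (deriv φ) x)) + q x * φ x| ≤ C * |x| ^ (-α))
    (hlim : Tendsto φ atBot (nhds 0))
    (hqc : ∃ X : ℝ, ∀ x ≤ X, c * |x| ≤ q x) :
    ∃ C > (0:ℝ), ∃ X : ℝ, ∀ x ≤ X, |φ x| ≤ C * |x| ^ (-(α + 1)) := by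
  obtain ⟨C, hC, X, hX⟩ := hO
  obtain ⟨X2, hX2⟩ := hqc
  set p : ℝ := α + 1 with hp
  have hppos : 0 < p := by positivity
  -- differentiability of φ
  have hφdiff : Differentiable ℝ φ := hφ.differentiable (by norm_num)
  have hφ1 : ∀ x, HasDerivAt φ (deriv φ x) x := fun x => (hφdiff x).hasDerivAt
  have hφ2diff : Differentiable ℝ (deriv φ) := by
    have h2 : ContDiff ℝ ((1:WithTop ℕ∞) + 1) φ := by
      convert hφ using 2
      norm_num
    exact (contDiff_succ_iff_deriv.mp h2).2.2.differentiable one_ne_zero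
  have hφ2 : ∀ x, HasDerivAt (deriv φ) (deriv (deriv φ) x) x := fun x => (hφ2diff x).hasDerivAt
  -- choose the cutoff point
  set X0 : ℝ := min (min X X2) (-(1 + 2 * p * (p + 1) / c)) with hX0def
  have hX0X : X0 ≤ X := le_trans (min_le_left _ _) (min_le_left _ _)
  have hX0X2 : X0 ≤ X2 := le_trans (min_le_left _ _) (min_le_right _ _)
  have hX0le : X0 ≤ -(1 + 2 * p * (p + 1) / c) := min_le_right _ _
  have haux : 0 < 2 * p * (p + 1) / c := by positivity
  have hX0neg : X0 < 0 := lt_of_le_of_lt hX0le (by linarith)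
  have hX0one : 1 ≤ -X0 := by
    have : 1 + 2 * p * (p + 1) / c ≤ -X0 := by linarith
    linarith
  have hX0big : 2 * p * (p + 1) / c ≤ -X0 := by
    have : 1 + 2 * p * (p + 1) / c ≤ -X0 := by linarith
    linarith
  -- the constant
  set K : ℝ := 2 * C / c + |φ X0| * (-X0) ^ p + 1 with hK
  have hX0pos : (0:ℝ) < -X0 := by linarith
  have hKpos : 0 < K := by positivity
  -- the barrier function
  set ψ : ℝ → ℝ := fun x => K * (-x) ^ (-p) with hψ
  set ψ' : ℝ → ℝ := fun x => K * (p * (-x) ^ (-p - 1)) with hψ'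
  set ψ'' : ℝ → ℝ := fun x => K * (p * ((p + 1) * (-x) ^ (-p - 2))) with hψ''
  have hψd1 : ∀ x < (0:ℝ), HasDerivAt ψ (ψ' x) x := by
    intro x hx
    have := (hasDerivAt_negpow (-p) hx).const_mul K
    refine this.congr_deriv ?_
    simp only [hψ']
    ring_nf
  have hψd2 : ∀ x < (0:ℝ), HasDerivAt ψ' (ψ'' x) x := by
    intro x hx
    have := ((hasDerivAt_negpow (-p - 1) hx).const_mul p).const_mul K
    refine this.congr_deriv ?_
    simp only [hψ'']
    ring_nf
  have hψpos : ∀ x < (0:ℝ), 0 < ψ x := by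
    intro x hx
    have : (0:ℝ) < -x := by linarith
    exact mul_pos hKpos (Real.rpow_pos_of_pos this _)
  -- key differential inequality for the barrier
  have hkey : ∀ x ≤ X0, C * (-x) ^ (-α) ≤ -ψ'' x + q x * ψ x := by
    intro x hx
    have hxneg : x < 0 := lt_of_le_of_lt hx hX0neg
    have hmx : (0:ℝ) < -x := by linarith
    have hmx1 : (1:ℝ) ≤ -x := by linarith
    have hA : (0:ℝ) < (-x) ^ (-α) := Real.rpow_pos_of_pos hmx _
    -- q x * ψ x ≥ c * K * (-x)^(-α)
    have h1 : c * K * (-x) ^ (-α) ≤ q x * ψ x := by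
      have hq1 : c * (-x) ≤ q x := by
        have := hX2 x (le_trans hx hX0X2)
        rwa [abs_of_neg hxneg] at this
      have hψx : ψ x = K * (-x) ^ (-p) := rfl
      have hr : (-x) * (-x) ^ (-p) = (-x) ^ (-α) := by
        rw [show (-α) = 1 + (-p) by rw [hp]; ring, Real.rpow_add hmx, Real.rpow_one]
      calc c * K * (-x) ^ (-α) = (c * (-x)) * (K * (-x) ^ (-p)) := by
            rw [← hr]; ring
        _ ≤ q x * (K * (-x) ^ (-p)) := by
            apply mul_le_mul_of_nonneg_right hq1
            positivity
        _ = q x * ψ x := rfl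
    -- ψ'' x ≤ (c/2) * K * (-x)^(-α)
    have h2 : ψ'' x ≤ c / 2 * K * (-x) ^ (-α) := by
      have hr : (-x) ^ (-p - 2) = (-x) ^ (-α) * (-x) ^ (-(3:ℝ)) := by
        rw [← Real.rpow_add hmx, show (-α) + -(3:ℝ) = -p - 2 by rw [hp]; ring]
      have hbound : (-x) ^ (-(3:ℝ)) ≤ c / (2 * p * (p + 1)) := by
        have h3 : (-x) ^ (-(3:ℝ)) ≤ (-x) ^ (-(1:ℝ)) :=
          Real.rpow_le_rpow_of_exponent_le hmx1 (by norm_num)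
        have h4 : (-x) ^ (-(1:ℝ)) = (-x)⁻¹ := by
          rw [Real.rpow_neg (le_of_lt hmx), Real.rpow_one]
        have h5 : (-x)⁻¹ ≤ c / (2 * p * (p + 1)) := by
          rw [inv_le_iff_one_le_mul₀ hmx, ← div_le_iff₀' (by positivity : (0:ℝ) < c / (2 * p * (p+1)))]
          have : (2 * p * (p + 1)) / c ≤ -x := le_trans hX0big (by linarith)
          calc 1 / (c / (2 * p * (p + 1))) = 2 * p * (p + 1) / c := by
                rw [one_div_div]
            _ ≤ -x := this
        linarith
      calc ψ'' x = K * (p * (p + 1)) * ((-x) ^ (-α) * (-x) ^ (-(3:ℝ))) := by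
            rw [← hr]; simp only [hψ'']; ring
        _ ≤ K * (p * (p + 1)) * ((-x) ^ (-α) * (c / (2 * p * (p + 1)))) := by
            apply mul_le_mul_of_nonneg_left _ (by positivity)
            exact mul_le_mul_of_nonneg_left hbound (le_of_lt hA)
        _ = c / 2 * K * (-x) ^ (-α) := by
            field_simp
    have hCK : C ≤ c / 2 * K := by
      have : 2 * C / c ≤ K := by
        rw [hK]
        have : (0:ℝ) ≤ |φ X0| * (-X0) ^ p := by positivity
        linarith
      calc C = c / 2 * (2 * C / c) := by field_simp
        _ ≤ c / 2 * K := mul_le_mul_of_nonneg_left this (by positivity)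
    calc C * (-x) ^ (-α) ≤ c / 2 * K * (-x) ^ (-α) :=
          mul_le_mul_of_nonneg_right hCK (le_of_lt hA)
      _ = c * K * (-x) ^ (-α) - c / 2 * K * (-x) ^ (-α) := by ring
      _ ≤ q x * ψ x - ψ'' x := sub_le_sub h1 h2
      _ = -ψ'' x + q x * ψ x := by ring
  -- q is positive on (-∞, X0]
  have hqpos : ∀ x ≤ X0, 0 < q x := by
    intro x hx
    have hxneg : x < 0 := lt_of_le_of_lt hx hX0neg
    have := hX2 x (le_trans hx hX0X2)
    have h1 : (1:ℝ) ≤ |x| := by rw [abs_of_neg hxneg]; linarith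
    nlinarith
  -- ψ tends to 0 at -∞
  have hψlim : Tendsto ψ atBot (nhds 0) := by
    have h1 : Tendsto (fun x : ℝ => (-x) ^ (-p)) atBot (nhds 0) :=
      (tendsto_rpow_neg_atTop hppos).comp tendsto_neg_atBot_atTop
    have := h1.const_mul K
    simpa using this
  -- ψ dominates |φ| at the endpoint
  have hend : |φ X0| ≤ ψ X0 := by
    have hinv : (-X0) ^ p * (-X0) ^ (-p) = 1 := by
      rw [← Real.rpow_add hX0pos]; simp
    have hKge : |φ X0| * (-X0) ^ p ≤ K := by
      have h1 : (0:ℝ) ≤ 2 * C / c := by positivity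
      rw [hK]; linarith
    have hppow : (0:ℝ) < (-X0) ^ (-p) := Real.rpow_pos_of_pos hX0pos _
    calc |φ X0| = |φ X0| * ((-X0) ^ p * (-X0) ^ (-p)) := by rw [hinv, mul_one]
      _ = (|φ X0| * (-X0) ^ p) * (-X0) ^ (-p) := by ring
      _ ≤ K * (-X0) ^ (-p) := mul_le_mul_of_nonneg_right hKge (le_of_lt hppow)
      _ = ψ X0 := rfl
  -- comparison for ψ ± φ
  have hcomp : ∀ s : ℝ, |s| = 1 → ∀ x ≤ X0, 0 ≤ ψ x + s * φ x := by
    intro s hs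
    apply barrier_nonneg (u' := fun x => ψ' x + s * deriv φ x)
      (u'' := fun x => ψ'' x + s * deriv (deriv φ) x) (q := q)
    · intro x hx
      have hxneg : x < 0 := lt_of_le_of_lt hx hX0neg
      exact (hψd1 x hxneg).add ((hφ1 x).const_mul s)
    · intro x hx
      have hxneg : x < 0 := lt_of_le_of_lt hx hX0neg
      exact (hψd2 x hxneg).add ((hφ2 x).const_mul s)
    · exact hqpos
    · intro x hx
      have hxneg : x < 0 := lt_of_le_of_lt hx hX0neg
      have hE := hX x (le_trans hx hX0X)
      rw [abs_of_neg hxneg] at hE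
      have hkey' := hkey x hx
      have habs : |s * ((-(deriv (deriv φ) x)) + q x * φ x)| ≤ C * (-x) ^ (-α) := by
        rw [abs_mul, hs, one_mul]; exact hE
      have h1 : -(C * (-x) ^ (-α)) ≤ s * ((-(deriv (deriv φ) x)) + q x * φ x) :=
        neg_le_of_abs_le habs
      have : -(ψ'' x + s * deriv (deriv φ) x) + q x * (ψ x + s * φ x)
          = (-ψ'' x + q x * ψ x) + s * ((-(deriv (deriv φ) x)) + q x * φ x) := by ring
      rw [this]
      linarith
    · have h1 : -|s * φ X0| ≤ s * φ X0 := neg_abs_le _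
      have h2 : |s * φ X0| = |φ X0| := by rw [abs_mul, hs, one_mul]
      rw [h2] at h1
      linarith
    · have h1 : Tendsto (fun x => s * φ x) atBot (nhds (s * 0)) := hlim.const_mul s
      rw [mul_zero] at h1
      have := hψlim.add h1
      simpa using this
  refine ⟨K, hKpos, X0, ?_⟩
  intro x hx
  have hxneg : x < 0 := lt_of_le_of_lt hx hX0neg
  have hplus := hcomp 1 (by norm_num) x hx
  have hminus := hcomp (-1) (by norm_num) x hx
  have habs : |φ x| ≤ ψ x := by
    rw [abs_le]
    constructor <;> [linarith [hplus]; linarith [hminus]]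
  have : ψ x = K * |x| ^ (-(α + 1)) := by
    rw [abs_of_neg hxneg, ← hp]
  linarith [habs, this.ge, this.le]
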